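/- Let n ≥ 2, a > 0, 0 < |c| < 1, and let g be the n-dimensional solvable real Lie algebra with basis e₁,…,eₙ and brackets [e_i,e_j] = 0 for 1 ≤ i,j ≤ n−1 and [eₙ,e_i] = a·e_i for 1 ≤ i ≤ n−1; let α be the inner product on g making e₁,…,eₙ orthonormal. Then the Randers norm F(y) := √(α(y,y)) + c·α(eₙ,y) is a Minkowski norm on g, and F is cyclic; thus g carries a non-Riemannian cyclic left-invariant Randers metric. -/

import Mathlib

noncomputable section

/-- The fundamental tensor `g_y(u,v) = (1/2)·∂²/∂s∂t|_{s=t=0} F(y+su+tv)²`. -/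
def gTensor {V : Type*} [NormedAddCommGroup V] [NormedSpace ℝ V]
    (F : V → ℝ) (y u v : V) : ℝ :=
  (1 / 2) * deriv (fun s : ℝ => deriv (fun t : ℝ => (F (y + s • u + t • v)) ^ 2) 0) 0

/-- The Cartan tensor `C_y(u,v,w) = (1/2)·d/dt|_{t=0} g_{y+tw}(u,v)`. -/
def cartanTensor {V : Type*} [NormedAddCommGroup V] [NormedSpace ℝ V]
    (F : V → ℝ) (y u v w : V) : ℝ :=
  (1 / 2) * deriv (fun t : ℝ => gTensor F (y + t • w) u v) 0

/-- `F` is a Minkowski norm: positive and smooth away from `0`, positively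
homogeneous of degree one, with positive-definite symmetric bilinear fundamental tensor. -/
structure IsMinkowskiNorm {V : Type*} [NormedAddCommGroup V] [NormedSpace ℝ V]
    (F : V → ℝ) : Prop where
  pos : ∀ y : V, y ≠ 0 → 0 < F y
  smooth : ContDiffOn ℝ (⊤ : ℕ∞) F {(0 : V)}ᶜ
  homog : ∀ c : ℝ, 0 < c → ∀ y : V, F (c • y) = c * F y
  g_symm : ∀ y : V, y ≠ 0 → ∀ u v : V, gTensor F y u v = gTensor F y v u
  g_add_left : ∀ y : V, y ≠ 0 → ∀ u u' v : V,
    gTensor F y (u + u') v = gTensor F y u v + gTensor F y u' v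
  g_smul_left : ∀ y : V, y ≠ 0 → ∀ (c : ℝ) (u v : V),
    gTensor F y (c • u) v = c * gTensor F y u v
  g_posdef : ∀ y : V, y ≠ 0 → ∀ u : V, u ≠ 0 → 0 < gTensor F y u u

/-- A Lie algebra structure on the real vector space `V`, given as a bilinear map. -/
structure IsLieBracket {V : Type*} [AddCommGroup V] [Module ℝ V]
    (L : V →ₗ[ℝ] V →ₗ[ℝ] V) : Prop where
  alternate : ∀ x : V, L x x = 0
  jacobi : ∀ x y z : V, L x (L y z) = L (L x y) z + L y (L x z)

/-- The cyclic condition for a Minkowski norm on a Lie algebra. -/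
def IsCyclicNorm {V : Type*} [NormedAddCommGroup V] [NormedSpace ℝ V]
    (L : V →ₗ[ℝ] V →ₗ[ℝ] V) (F : V → ℝ) : Prop :=
  ∀ y : V, y ≠ 0 → ∀ x z : V,
    gTensor F y (L x y) z + gTensor F y (L y z) x + gTensor F y (L z x) y = 0

/-- The Riemann curvature `R_y(u) = D_η N(y,u) − N(y,N(y,u)) + N(y,[y,u]) − [y,N(y,u)]`. -/
def RiemannCurv {V : Type*} [NormedAddCommGroup V] [NormedSpace ℝ V]
    (L : V →ₗ[ℝ] V →ₗ[ℝ] V) (η : V → V) (N : V → V → V) (y u : V) : V :=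
  fderiv ℝ (fun z => N z u) y (η y) - N y (N y u) + N y (L y u) - L y (N y u)

/-- Projection onto `m` along `h` in the decomposition `g = h ⊕ m`. -/
def projTo {V : Type*} [AddCommGroup V] [Module ℝ V] (h m : Submodule ℝ V)
    (hcompl : IsCompl h m) : V →ₗ[ℝ] m :=
  m.linearProjOfIsCompl h hcompl.symm

/-- The inner product making the basis `e` orthonormal. -/
def basisInner {V : Type*} [AddCommGroup V] [Module ℝ V] {ι : Type*} [Fintype ι]
    (e : Module.Basis ι ℝ V) (x y : V) : ℝ :=
  ∑ k, e.repr x k * e.repr y k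


section MyRandersAux

open Real Filter

private lemma myDerivA (A0 B0 C0 c d0 e0 : ℝ) (hA : 0 < A0) :
    deriv (fun t : ℝ => (Real.sqrt (A0 + 2*B0*t + C0*t^2) + c*(d0 + e0*t))^2) 0
      = 2*B0 + 2*c*e0*Real.sqrt A0 + 2*c*d0*B0/Real.sqrt A0 + 2*c^2*d0*e0 := by
  have hP : HasDerivAt (fun t : ℝ => A0 + 2*B0*t + C0*t^2) (2*B0) 0 := by
    have h := (((hasDerivAt_id (0:ℝ)).const_mul (2*B0)).const_add A0).add
      ((hasDerivAt_pow 2 (0:ℝ)).const_mul C0)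
    simpa [Pi.add_def] using h
  have hP0 : (A0 + 2*B0*(0:ℝ) + C0*(0:ℝ)^2) ≠ 0 := by simpa using hA.ne'
  have hs : HasDerivAt (fun t : ℝ => Real.sqrt (A0 + 2*B0*t + C0*t^2))
      ((2*B0) / (2*Real.sqrt A0)) 0 := by
    have := hP.sqrt hP0
    simpa using this
  have hlin : HasDerivAt (fun t : ℝ => c*(d0 + e0*t)) (c*e0) 0 := by
    have h := (((hasDerivAt_id (0:ℝ)).const_mul e0).const_add d0).const_mul c
    simpa using h
  have hsum := (hs.add hlin).pow 2
  rw [(show HasDerivAt (fun t : ℝ => (Real.sqrt (A0 + 2*B0*t + C0*t^2) + c*(d0 + e0*t))^2) _ 0 from hsum).deriv]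
  have h0 : Real.sqrt A0 ≠ 0 := (Real.sqrt_pos.2 hA).ne'
  norm_num
  field_simp
  ring

private lemma myDerivB (ayy ayu auu ayv auv dv dy du c : ℝ) (hA : 0 < ayy) :
    deriv (fun s : ℝ => 2*(ayv + auv*s) + 2*c*dv*Real.sqrt (ayy + 2*ayu*s + auu*s^2)
      + 2*c*(dy + du*s)*(ayv + auv*s)/Real.sqrt (ayy + 2*ayu*s + auu*s^2)
      + 2*c^2*(dy + du*s)*dv) 0
    = 2*(auv + c^2*du*dv + c*(dv*ayu + du*ayv + dy*auv)/Real.sqrt ayy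
        - c*dy*ayu*ayv/(Real.sqrt ayy)^3) := by
  have h0 : Real.sqrt ayy ≠ 0 := (Real.sqrt_pos.2 hA).ne'
  have hP : HasDerivAt (fun s : ℝ => ayy + 2*ayu*s + auu*s^2) (2*ayu) 0 := by
    have h := (((hasDerivAt_id (0:ℝ)).const_mul (2*ayu)).const_add ayy).add
      ((hasDerivAt_pow 2 (0:ℝ)).const_mul auu)
    simpa [Pi.add_def] using h
  have hP0 : (ayy + 2*ayu*(0:ℝ) + auu*(0:ℝ)^2) ≠ 0 := by simpa using hA.ne'
  have hs : HasDerivAt (fun s : ℝ => Real.sqrt (ayy + 2*ayu*s + auu*s^2))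
      ((2*ayu) / (2*Real.sqrt ayy)) 0 := by simpa using hP.sqrt hP0
  have h1 : HasDerivAt (fun s : ℝ => 2*(ayv + auv*s)) (2*auv) 0 := by
    have h := (((hasDerivAt_id (0:ℝ)).const_mul auv).const_add ayv).const_mul 2
    simpa using h
  have h2 : HasDerivAt (fun s : ℝ => 2*c*dv*Real.sqrt (ayy + 2*ayu*s + auu*s^2))
      (2*c*dv*((2*ayu) / (2*Real.sqrt ayy))) 0 := hs.const_mul _
  have hd : HasDerivAt (fun s : ℝ => dy + du*s) du 0 := by
    have h := ((hasDerivAt_id (0:ℝ)).const_mul du).const_add dy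
    simpa using h
  have hv : HasDerivAt (fun s : ℝ => ayv + auv*s) auv 0 := by
    have h := ((hasDerivAt_id (0:ℝ)).const_mul auv).const_add ayv
    simpa using h
  have hN : HasDerivAt (fun s : ℝ => 2*c*(dy + du*s)*(ayv + auv*s))
      (2*c*du*(ayv + auv*0) + 2*c*(dy + du*0)*auv) 0 := by
    have h := ((hd.const_mul (2*c)).mul hv)
    exact h
  have h3 := hN.div hs (by simpa using h0)
  have h4 : HasDerivAt (fun s : ℝ => 2*c^2*(dy + du*s)*dv) (2*c^2*du*dv) 0 := by
    have h := (hd.const_mul (2*c^2)).mul_const dv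
    exact h
  have H := ((h1.add h2).add h3).add h4
  rw [(show HasDerivAt (fun s : ℝ => 2*(ayv + auv*s) + 2*c*dv*Real.sqrt (ayy + 2*ayu*s + auu*s^2)
      + 2*c*(dy + du*s)*(ayv + auv*s)/Real.sqrt (ayy + 2*ayu*s + auu*s^2)
      + 2*c^2*(dy + du*s)*dv) _ 0 from H).deriv]
  have hsq : Real.sqrt ayy ^ 2 = ayy := Real.sq_sqrt hA.le
  norm_num
  set r := Real.sqrt ayy with hr
  field_simp
  ring

variable {V : Type*} [AddCommGroup V] [Module ℝ V]
variable {ι : Type*} [Fintype ι]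

private lemma bi_symm (e : Module.Basis ι ℝ V) (x y : V) :
    basisInner e x y = basisInner e y x := by
  simp [basisInner, mul_comm]

private lemma bi_add_right (e : Module.Basis ι ℝ V) (x y z : V) :
    basisInner e x (y + z) = basisInner e x y + basisInner e x z := by
  simp only [basisInner, map_add, Finsupp.add_apply, mul_add]
  exact Finset.sum_add_distrib

private lemma bi_smul_right (e : Module.Basis ι ℝ V) (t : ℝ) (x y : V) :
    basisInner e x (t • y) = t * basisInner e x y := by
  simp only [basisInner, map_smul, Finsupp.smul_apply, smul_eq_mul, Finset.mul_sum]
  exact Finset.sum_congr rfl fun k _ => by ring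

private lemma bi_add_left (e : Module.Basis ι ℝ V) (x y z : V) :
    basisInner e (x + y) z = basisInner e x z + basisInner e y z := by
  rw [bi_symm, bi_add_right, bi_symm e z x, bi_symm e z y]

private lemma bi_smul_left (e : Module.Basis ι ℝ V) (t : ℝ) (x y : V) :
    basisInner e (t • x) y = t * basisInner e x y := by
  rw [bi_symm, bi_smul_right, bi_symm e y x]

private lemma bi_neg_left (e : Module.Basis ι ℝ V) (x y : V) :
    basisInner e (-x) y = - basisInner e x y := by
  have := bi_smul_left e (-1) x y
  simpa using this

private lemma bi_nonneg (e : Module.Basis ι ℝ V) (x : V) : 0 ≤ basisInner e x x :=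
  Finset.sum_nonneg fun k _ => mul_self_nonneg _

private lemma bi_pos (e : Module.Basis ι ℝ V) (x : V) (hx : x ≠ 0) : 0 < basisInner e x x := by
  have hr : e.repr x ≠ 0 := fun h => hx (by simpa using e.repr.injective (by simpa using h))
  obtain ⟨k, hk⟩ : ∃ k, e.repr x k ≠ 0 := by
    by_contra h
    push_neg at h
    exact hr (Finsupp.ext h)
  exact Finset.sum_pos' (fun j _ => mul_self_nonneg _)
    ⟨k, Finset.mem_univ k, mul_self_pos.mpr hk⟩

private lemma bi_quad (e : Module.Basis ι ℝ V) (w v : V) (t : ℝ) :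
    basisInner e (w + t • v) (w + t • v)
      = basisInner e w w + 2*basisInner e w v*t + basisInner e v v*t^2 := by
  simp only [bi_add_left, bi_add_right, bi_smul_left, bi_smul_right]
  rw [bi_symm e v w]
  ring

private lemma bi_lin (e : Module.Basis ι ℝ V) (b w v : V) (t : ℝ) :
    basisInner e b (w + t • v) = basisInner e b w + basisInner e b v*t := by
  rw [bi_add_right, bi_smul_right]
  ring

private lemma bi_lin' (e : Module.Basis ι ℝ V) (w u v : V) (t : ℝ) :
    basisInner e (w + t • u) v = basisInner e w v + basisInner e u v*t := by
  rw [bi_add_left, bi_smul_left]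
  ring

private lemma bi_cs (e : Module.Basis ι ℝ V) (x w : V) :
    (basisInner e x w)^2 ≤ basisInner e x x * basisInner e w w := by
  rcases eq_or_ne x 0 with rfl | hx
  · have h0 : basisInner e 0 w = 0 := by simp [basisInner]
    have h00 : basisInner e (0:V) 0 = 0 := by simp [basisInner]
    simp [h0, h00]
  · have hA := bi_pos e x hx
    have h := bi_nonneg e (basisInner e x x • w - basisInner e x w • x)
    simp only [sub_eq_add_neg, ← neg_smul, bi_add_left, bi_add_right, bi_smul_left,
      bi_smul_right] at h
    rw [bi_symm e w x] at h
    nlinarith [h, hA]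

private lemma bi_coord (e : Module.Basis ι ℝ V) (j : ι) (x : V) :
    basisInner e (e j) x = e.repr x j := by
  unfold basisInner
  rw [Module.Basis.repr_self, Finset.sum_eq_single j]
  · simp
  · intro b _ hb
    simp [Finsupp.single_apply, Ne.symm hb]
  · intro h
    exact absurd (Finset.mem_univ j) h

end MyRandersAux

section MyRandersMain

open Real Filter

variable {V : Type*} [NormedAddCommGroup V] [NormedSpace ℝ V]
variable {ι : Type*} [Fintype ι]

private lemma gTensor_formula (e : Module.Basis ι ℝ V) (c : ℝ) (b y u v : V) (hy : y ≠ 0) :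
    gTensor (fun x => Real.sqrt (basisInner e x x) + c * basisInner e b x) y u v
      = basisInner e u v + c^2*basisInner e b u*basisInner e b v
        + c*(basisInner e b v*basisInner e y u + basisInner e b u*basisInner e y v
             + basisInner e b y*basisInner e u v)/Real.sqrt (basisInner e y y)
        - c*basisInner e b y*basisInner e y u*basisInner e y v
            /(Real.sqrt (basisInner e y y))^3 := by
  have hA : 0 < basisInner e y y := bi_pos e y hy
  have hev : (fun s : ℝ => deriv (fun t : ℝ =>
        ((fun x => Real.sqrt (basisInner e x x) + c * basisInner e b x) (y + s • u + t • v))^2) 0)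
      =ᶠ[nhds (0:ℝ)] (fun s : ℝ => 2*(basisInner e y v + basisInner e u v*s)
        + 2*c*basisInner e b v*Real.sqrt (basisInner e y y + 2*basisInner e y u*s
            + basisInner e u u*s^2)
        + 2*c*(basisInner e b y + basisInner e b u*s)*(basisInner e y v + basisInner e u v*s)
            /Real.sqrt (basisInner e y y + 2*basisInner e y u*s + basisInner e u u*s^2)
        + 2*c^2*(basisInner e b y + basisInner e b u*s)*basisInner e b v) := by
    have hcont : ContinuousAt (fun s : ℝ => basisInner e y y + 2*basisInner e y u*s
        + basisInner e u u*s^2) 0 := by fun_prop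
    have hpos : ∀ᶠ s : ℝ in nhds 0, 0 < basisInner e y y + 2*basisInner e y u*s
        + basisInner e u u*s^2 :=
      continuousAt_const.eventually_lt hcont (by simpa using hA)
    filter_upwards [hpos] with s hs
    have hws : 0 < basisInner e (y + s • u) (y + s • u) := by rw [bi_quad]; exact hs
    have hfun : (fun t : ℝ =>
          ((fun x => Real.sqrt (basisInner e x x) + c * basisInner e b x) (y + s • u + t • v))^2)
        = fun t : ℝ => (Real.sqrt (basisInner e (y + s • u) (y + s • u)
            + 2*basisInner e (y + s • u) v*t + basisInner e v v*t^2)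
          + c*(basisInner e b (y + s • u) + basisInner e b v*t))^2 := by
      funext t
      simp only []
      rw [bi_quad e (y + s • u) v t, bi_lin e b (y + s • u) v t]
    rw [hfun, myDerivA _ _ _ _ _ _ hws]
    rw [bi_quad e y u s, bi_lin' e y u v s, bi_lin e b y u s]
  unfold gTensor
  rw [hev.deriv_eq, myDerivB _ _ _ _ _ _ _ _ _ hA]
  ring

private lemma randers_pos (e : Module.Basis ι ℝ V) (b : V) (hb : basisInner e b b = 1) (c : ℝ)
    (hc1 : |c| < 1) (y : V) (hy : y ≠ 0) :
    0 < Real.sqrt (basisInner e y y) + c * basisInner e b y := by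
  have hA := bi_pos e y hy
  have hr : 0 < Real.sqrt (basisInner e y y) := Real.sqrt_pos.2 hA
  have hcs := bi_cs e b y
  rw [hb, one_mul] at hcs
  have habs : |basisInner e b y| ≤ Real.sqrt (basisInner e y y) := by
    rw [← Real.sqrt_sq_eq_abs]
    exact Real.sqrt_le_sqrt hcs
  have h1 : |c * basisInner e b y| ≤ |c| * Real.sqrt (basisInner e y y) := by
    rw [abs_mul]
    exact mul_le_mul_of_nonneg_left habs (abs_nonneg c)
  have h2 : |c| * Real.sqrt (basisInner e y y) < 1 * Real.sqrt (basisInner e y y) :=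
    mul_lt_mul_of_pos_right hc1 hr
  have h3 := neg_abs_le (c * basisInner e b y)
  linarith

private lemma posdef_scalar (A m p dy du c r : ℝ) (hA : 0 < A) (hr : 0 < r) (hr2 : r^2 = A)
    (hFy : 0 < r + c*dy)
    (hcase : (A*m = p*p ∧ A*du = p*dy ∧ p ≠ 0) ∨ p*p < A*m) :
    0 < m + c^2*du*du + c*(du*p + du*p + dy*m)/r - c*dy*p*p/r^3 := by
  have hrne : r ≠ 0 := hr.ne'
  have key : m + c^2*du*du + c*(du*p + du*p + dy*m)/r - c*dy*p*p/r^3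
      = ((r + c*dy)/r)*(m - p^2/r^2) + (p/r + c*du)^2 := by
    field_simp
    ring
  rw [key]
  rcases hcase with ⟨h2, h1, hp⟩ | h4
  · have e1 : m - p^2/r^2 = 0 := by
      rw [hr2, sub_eq_zero, eq_div_iff hA.ne']
      linear_combination h2
    have e2 : p/r + c*du = (p/A)*(r + c*dy) := by
      field_simp
      linear_combination c*r*h1 - p*hr2
    rw [e1, mul_zero, zero_add, pow_two]
    have hne : p/r + c*du ≠ 0 := by
      rw [e2]; exact mul_ne_zero (div_ne_zero hp hA.ne') hFy.ne'
    exact mul_self_pos.mpr hne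
  · have h3 : 0 < m - p^2/r^2 := by
      rw [hr2, sub_pos, div_lt_iff₀ hA]
      nlinarith [h4]
    nlinarith [mul_pos (div_pos hFy hr) h3, sq_nonneg (p/r + c*du)]

private lemma randers_minkowski [FiniteDimensional ℝ V] (e : Module.Basis ι ℝ V) (b : V)
    (hb : basisInner e b b = 1) (c : ℝ) (hc1 : |c| < 1) :
    IsMinkowskiNorm (fun x : V => Real.sqrt (basisInner e x x) + c * basisInner e b x) := by
  refine ⟨?_, ?_, ?_, ?_, ?_, ?_, ?_⟩
  · intro y hy
    exact randers_pos e b hb c hc1 y hy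
  · have hq : ContDiff ℝ (⊤:ℕ∞) (fun x : V => basisInner e x x) := by
      have h : (fun x : V => basisInner e x x)
          = fun x : V => ∑ k, (LinearMap.toContinuousLinearMap (e.coord k)) x
              * (LinearMap.toContinuousLinearMap (e.coord k)) x := by
        funext x
        simp [basisInner, Module.Basis.coord_apply]
      rw [h]
      exact ContDiff.sum fun k _ =>
        ((LinearMap.toContinuousLinearMap (e.coord k)).contDiff).mul
          ((LinearMap.toContinuousLinearMap (e.coord k)).contDiff)
    have hlin : ContDiff ℝ (⊤:ℕ∞) (fun x : V => c * basisInner e b x) := by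
      have h : (fun x : V => c * basisInner e b x)
          = fun x : V => c * ∑ k, e.repr b k * (LinearMap.toContinuousLinearMap (e.coord k)) x := by
        funext x
        simp [basisInner, Module.Basis.coord_apply]
      rw [h]
      exact contDiff_const.mul (ContDiff.sum fun k _ =>
        contDiff_const.mul (LinearMap.toContinuousLinearMap (e.coord k)).contDiff)
    intro x hx
    have hx0 : x ≠ 0 := by simpa using hx
    exact (((hq.contDiffAt).sqrt (bi_pos e x hx0).ne').add hlin.contDiffAt).contDiffWithinAt
  · intro t ht y
    simp only [bi_smul_left, bi_smul_right]
    rw [show t*(t*basisInner e y y) = t^2*basisInner e y y by ring,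
      Real.sqrt_mul (sq_nonneg t), Real.sqrt_sq ht.le]
    ring
  · intro y hy u v
    rw [gTensor_formula e c b y u v hy, gTensor_formula e c b y v u hy, bi_symm e v u]
    ring
  · intro y hy u u' v
    rw [gTensor_formula e c b y (u+u') v hy, gTensor_formula e c b y u v hy,
      gTensor_formula e c b y u' v hy, bi_add_right e b u u', bi_add_right e y u u',
      bi_add_left e u u' v]
    ring
  · intro y hy t u v
    rw [gTensor_formula e c b y (t • u) v hy, gTensor_formula e c b y u v hy,
      bi_smul_right e t b u, bi_smul_right e t y u, bi_smul_left e t u v]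
    ring
  · intro y hy u hu
    rw [gTensor_formula e c b y u u hy]
    have hA : 0 < basisInner e y y := bi_pos e y hy
    have hr : 0 < Real.sqrt (basisInner e y y) := Real.sqrt_pos.2 hA
    have hr2 : (Real.sqrt (basisInner e y y))^2 = basisInner e y y := Real.sq_sqrt hA.le
    have hFy := randers_pos e b hb c hc1 y hy
    refine posdef_scalar _ _ _ _ _ c _ hA hr hr2 hFy ?_
    rcases eq_or_ne ((basisInner e y y) • u - (basisInner e y u) • y) 0 with h0 | h0
    · left
      have heq : (basisInner e y y) • u = (basisInner e y u) • y := sub_eq_zero.1 h0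
      refine ⟨?_, ?_, ?_⟩
      · have h := congrArg (basisInner e u) heq
        rw [bi_smul_right, bi_smul_right, bi_symm e u y] at h
        exact h
      · have h := congrArg (basisInner e b) heq
        rw [bi_smul_right, bi_smul_right] at h
        exact h
      · intro hp0
        rw [hp0, zero_smul] at heq
        exact hu (by simpa [smul_eq_zero, hA.ne'] using heq)
    · right
      have hQ := bi_pos e _ h0
      simp only [sub_eq_add_neg, ← neg_smul, bi_add_left, bi_add_right, bi_smul_left,
        bi_smul_right] at hQ
      rw [bi_symm e u y] at hQ
      nlinarith [hQ, hA]

end MyRandersMain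

/-- On the solvable Lie algebra with `[e_i,e_j] = 0` (`i,j ≤ n−1`) and
`[eₙ,e_i] = a·e_i` (`a > 0`), for `0 < |c| < 1` the Randers norm
`F(y) = √(α(y,y)) + c·α(eₙ,y)` (with `α` the inner product making `e` orthonormal) is a
Minkowski norm and is cyclic; it is moreover non-Riemannian. -/
theorem solvable_example_randers_cyclic
    {V : Type*} [NormedAddCommGroup V] [NormedSpace ℝ V] [FiniteDimensional ℝ V]
    (n : ℕ) (hn : 2 ≤ n) (a : ℝ) (ha : 0 < a)
    (e : Module.Basis (Fin n) ℝ V)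
    (ℓ : Fin n) (hℓ : (ℓ : ℕ) = n - 1)
    (L : V →ₗ[ℝ] V →ₗ[ℝ] V) (hL : IsLieBracket L)
    (hbr1 : ∀ i j : Fin n, i ≠ ℓ → j ≠ ℓ → L (e i) (e j) = 0)
    (hbr2 : ∀ i : Fin n, i ≠ ℓ → L (e ℓ) (e i) = a • e i)
    (c : ℝ) (hc0 : 0 < |c|) (hc1 : |c| < 1)
    (F : V → ℝ)
    (hFdef : ∀ y : V, F y = Real.sqrt (basisInner e y y) + c * basisInner e (e ℓ) y) :
    IsMinkowskiNorm F ∧ IsCyclicNorm L F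
      ∧ ¬ ∃ B : V →ₗ[ℝ] V →ₗ[ℝ] ℝ, ∀ y : V, F y = Real.sqrt (B y y) := by
  obtain rfl : F = fun x => Real.sqrt (basisInner e x x) + c * basisInner e (e ℓ) x :=
    funext hFdef
  have hbb : basisInner e (e ℓ) (e ℓ) = 1 := by
    rw [bi_coord]
    simp
  have hns : ∀ x y : V, basisInner e (-x) (-y) = basisInner e x y := by
    intro x y
    rw [bi_neg_left, bi_symm, bi_neg_left, bi_symm]
    ring
  have mink := randers_minkowski e (e ℓ) hbb c hc1
  refine ⟨mink, ?_, ?_⟩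
  · -- cyclic
    have anti : ∀ x z : V, L z x = - L x z := by
      intro x z
      have h := hL.alternate (x + z)
      simp only [map_add, LinearMap.add_apply, hL.alternate, zero_add, add_zero] at h
      exact eq_neg_of_add_eq_zero_left h
    have hrepr : ∀ i : Fin n, e.repr (e i) ℓ = if i = ℓ then 1 else 0 := by
      intro i
      simp [Module.Basis.repr_self, Finsupp.single_apply]
    have hLform : ∀ x z : V, L x z = (a * e.repr x ℓ) • z - (a * e.repr z ℓ) • x := by
      let M : V →ₗ[ℝ] V →ₗ[ℝ] V := LinearMap.mk₂ ℝ
        (fun x z => (a * e.repr x ℓ) • z - (a * e.repr z ℓ) • x)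
        (by intro m1 m2 nn; simp only [map_add, Finsupp.add_apply]; module)
        (by intro t m nn; simp only [map_smul, Finsupp.smul_apply, smul_eq_mul]; module)
        (by intro m n1 n2; simp only [map_add, Finsupp.add_apply]; module)
        (by intro t m nn; simp only [map_smul, Finsupp.smul_apply, smul_eq_mul]; module)
      have hLM : L = M := by
        apply e.ext; intro i
        apply e.ext; intro j
        show L (e i) (e j) = (a * e.repr (e i) ℓ) • e j - (a * e.repr (e j) ℓ) • e i
        rw [hrepr, hrepr]
        by_cases hi : i = ℓ
        · by_cases hj : j = ℓ
          · rw [hi, hj]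
            simp [hL.alternate]
          · rw [hi, hbr2 j hj]
            simp [hj]
        · by_cases hj : j = ℓ
          · rw [hj, anti (e ℓ) (e i), hbr2 i hi]
            simp [hi]
          · rw [hbr1 i j hi hj]
            simp [hi, hj]
      intro x z
      rw [hLM]
      rfl
    intro y hy x z
    have gadd := mink.g_add_left y hy
    have gsmul := mink.g_smul_left y hy
    have gsymm := mink.g_symm y hy
    set Fc : V → ℝ := fun x => Real.sqrt (basisInner e x x) + c * basisInner e (e ℓ) x
      with hFc
    have gsub : ∀ u w v : V, gTensor Fc y (u - w) v = gTensor Fc y u v - gTensor Fc y w v := by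
      intro u w v
      rw [sub_eq_add_neg, ← neg_one_smul ℝ w, gadd, gsmul]
      ring
    rw [hLform x y, hLform y z, hLform z x, gsub, gsub, gsub, gsmul, gsmul, gsmul, gsmul,
      gsmul, gsmul, gsymm y z, gsymm y x, gsymm x z]
    ring
  · -- non-Riemannian
    rintro ⟨Bf, hBf⟩
    have h1 := hBf (e ℓ)
    have h2 := hBf (-(e ℓ))
    have hco : basisInner e (e ℓ) (-(e ℓ)) = -1 := by
      rw [bi_symm, bi_neg_left, bi_symm, hbb]
    have hBneg : Bf (-(e ℓ)) (-(e ℓ)) = Bf (e ℓ) (e ℓ) := by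
      simp [map_neg]
    simp only [hbb, hco, hns, Real.sqrt_one, hBneg] at h1 h2
    have hc : c = 0 := by linarith
    rw [hc] at hc0
    simp at hc0


end
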